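/- arXiv:1107.1206 — 7 statements merged into one kernel-verified Lean document; each statement's English description precedes it below -/
import Mathlib

section
/- Let S be a finite set, R ⊆ S × S a relation, μ, ν sub-probability distributions on S (i.e. functions S → [0,1] with total mass at most 1), and ε ≥ 0. If there exists an ε-weight function for (μ, ν) with respect to R, then for every subset E ⊆ S we have μ(E) ≤ ν(R(E)) + ε, where R(E) = {y | ∃ x ∈ E, (x,y) ∈ R}. -/
open Finset

noncomputable def mass {S : Type*} [Fintype S] (μ : S → ℝ) (E : Set S) : ℝ :=
  ∑ s, Set.indicator E μ s

def relImage {S T : Type*} (R : S → T → Prop) (E : Set S) : Set T :=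
  {y | ∃ x ∈ E, R x y}

def IsSubdist {S : Type*} [Fintype S] (μ : S → ℝ) : Prop :=
  (∀ s, 0 ≤ μ s) ∧ ∑ s, μ s ≤ 1

/-- If there exists an ε-weight function for (μ, ν) with respect to R, then
    μ(E) ≤ ν(R(E)) + ε for every E ⊆ S. -/
theorem weight_function_implies_lifting {S : Type*} [Fintype S]
    (R : S → S → Prop) (μ ν : S → ℝ) (ε : ℝ)
    (hμ : IsSubdist μ) (hν : IsSubdist ν) (hε : 0 ≤ ε)
    (δ : S → S → ℝ)
    (hrange : ∀ s t, 0 ≤ δ s t ∧ δ s t ≤ 1)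
    (hR : ∀ s t, 0 < δ s t → R s t)
    (hrow : ∀ s, ∑ t, δ s t ≤ μ s)
    (hcol : ∀ t, ∑ s, δ s t ≤ ν t)
    (htot : mass μ Set.univ - ε ≤ ∑ s, ∑ t, δ s t) :
    ∀ E : Set S, mass μ E ≤ mass ν (relImage R E) + ε := by
  classical
  intro E
  set A : Finset S := Finset.univ.filter (· ∈ E) with hA
  set B : Finset S := Finset.univ.filter (· ∈ relImage R E) with hB
  have hmassE : mass μ E = ∑ s ∈ A, μ s := by
    rw [mass, hA, Finset.sum_filter]
    apply Finset.sum_congr rfl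
    intro s _
    by_cases hs : s ∈ E <;> simp [Set.indicator, hs]
  have hmassB : mass ν (relImage R E) = ∑ t ∈ B, ν t := by
    rw [mass, hB, Finset.sum_filter]
    apply Finset.sum_congr rfl
    intro t _
    by_cases ht : t ∈ relImage R E <;> simp [Set.indicator, ht]
  have hmassU : mass μ Set.univ = ∑ s, μ s := by
    simp [mass]
  -- step 1 : μ(E) ≤ ∑_{s∈A} rowsum + ε
  have hstep1 : ∑ s ∈ A, μ s ≤ (∑ s ∈ A, ∑ t, δ s t) + ε := by
    have hdef : ∑ s ∈ A, (μ s - ∑ t, δ s t) ≤ ∑ s, (μ s - ∑ t, δ s t) := by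
      apply Finset.sum_le_sum_of_subset_of_nonneg (Finset.subset_univ A)
      intro s _ _
      exact sub_nonneg.mpr (hrow s)
    have htot' : ∑ s, (μ s - ∑ t, δ s t) ≤ ε := by
      rw [Finset.sum_sub_distrib]
      have := htot
      rw [hmassU] at this
      linarith
    have := hdef.trans htot'
    rw [Finset.sum_sub_distrib] at this
    linarith
  -- step 2 : ∑_{s∈A} rowsum ≤ ν(R(E))
  have hstep2 : ∑ s ∈ A, ∑ t, δ s t ≤ ∑ t ∈ B, ν t := by
    have hzero : ∀ s ∈ A, ∀ t ∈ (Finset.univ : Finset S), t ∉ B → δ s t = 0 := by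
      intro s hs t _ htB
      by_contra hne
      have hpos : 0 < δ s t := lt_of_le_of_ne (hrange s t).1 (Ne.symm hne)
      apply htB
      rw [hB]
      simp only [Finset.mem_filter, Finset.mem_univ, true_and]
      exact ⟨s, by simpa [hA] using hs, hR s t hpos⟩
    calc ∑ s ∈ A, ∑ t, δ s t
        = ∑ s ∈ A, ∑ t ∈ B, δ s t := by
          apply Finset.sum_congr rfl
          intro s hs
          exact (Finset.sum_subset (Finset.subset_univ B) (hzero s hs)).symm
      _ = ∑ t ∈ B, ∑ s ∈ A, δ s t := Finset.sum_comm
      _ ≤ ∑ t ∈ B, ∑ s, δ s t := by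
          apply Finset.sum_le_sum
          intro t _
          apply Finset.sum_le_sum_of_subset_of_nonneg (Finset.subset_univ A)
          intro s _ _
          exact (hrange s t).1
      _ ≤ ∑ t ∈ B, ν t := Finset.sum_le_sum (fun t _ => hcol t)
  rw [hmassE, hmassB]
  linarith
end

section
/- Let S be a finite set, R ⊆ S × S, μ, ν sub-probability distributions on S, and ε ≥ 0. The relation μ L^ε(R) ν (i.e. for all E ⊆ S, μ(E) ≤ ν(R(E)) + ε) holds if and only if the maximal flow in the network N(μ, ν, R) is at least μ(S) − ε. -/
open Finset

def Lift {S : Type*} [Fintype S] (ε : ℝ) (R : S → S → Prop) (μ ν : S → ℝ) : Prop :=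
  ∀ E : Set S, mass μ E ≤ mass ν (relImage R E) + ε

/-- A flow in the network N(μ, ν, R): `fsrc s` is the flow on the edge (⊥, s),
    `fmid s t` the flow on the edge (s, t') (present iff R s t, capacity 1),
    and `fsnk t` the flow on the edge (t', ⊤). Capacity constraints and flow
    conservation at internal vertices are required. -/
structure NetworkFlow {S : Type*} [Fintype S] (μ ν : S → ℝ) (R : S → S → Prop) where
  fsrc : S → ℝ
  fmid : S → S → ℝ
  fsnk : S → ℝ
  src_nonneg : ∀ s, 0 ≤ fsrc s
  src_cap : ∀ s, fsrc s ≤ μ s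
  mid_nonneg : ∀ s t, 0 ≤ fmid s t
  mid_cap : ∀ s t, fmid s t ≤ 1
  mid_edge : ∀ s t, ¬ R s t → fmid s t = 0
  conserve_left : ∀ s, fsrc s = ∑ t, fmid s t
  conserve_right : ∀ t, ∑ s, fmid s t = fsnk t
  snk_nonneg : ∀ t, 0 ≤ fsnk t
  snk_cap : ∀ t, fsnk t ≤ ν t

/-- The value of the maximal flow in the network N(μ, ν, R). -/
noncomputable def maxFlow {S : Type*} [Fintype S] (μ ν : S → ℝ) (R : S → S → Prop) : ℝ :=
  sSup {v | ∃ f : NetworkFlow μ ν R, v = ∑ s, f.fsrc s}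

section Aux

open Classical in
lemma mass_eq_sum_ite {S : Type*} [Fintype S] (μ : S → ℝ) (E : Set S) :
    mass μ E = ∑ s, if s ∈ E then μ s else 0 := by
  simp [mass, Set.indicator_apply]

variable {S : Type*} [Fintype S] {μ ν : S → ℝ} {R : S → S → Prop}

def zeroFlow (hμ0 : ∀ s, 0 ≤ μ s) (hν0 : ∀ s, 0 ≤ ν s) : NetworkFlow μ ν R where
  fsrc := fun _ => 0
  fmid := fun _ _ => 0
  fsnk := fun _ => 0
  src_nonneg := fun _ => le_refl 0
  src_cap := hμ0
  mid_nonneg := fun _ _ => le_refl 0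
  mid_cap := fun _ _ => zero_le_one
  mid_edge := fun _ _ _ => rfl
  conserve_left := by simp
  conserve_right := by simp
  snk_nonneg := fun _ => le_refl 0
  snk_cap := hν0

lemma flowValues_nonempty (hμ0 : ∀ s, 0 ≤ μ s) (hν0 : ∀ s, 0 ≤ ν s) :
    {v | ∃ f : NetworkFlow μ ν R, v = ∑ s, f.fsrc s}.Nonempty :=
  ⟨_, zeroFlow hμ0 hν0, rfl⟩

lemma flowValues_bddAbove :
    BddAbove {v | ∃ f : NetworkFlow μ ν R, v = ∑ s, f.fsrc s} := by
  refine ⟨∑ s, μ s, fun v hv => ?_⟩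
  obtain ⟨f, rfl⟩ := hv
  exact Finset.sum_le_sum fun s _ => f.src_cap s

lemma cut_bound (f : NetworkFlow μ ν R) (E : Set S) :
    mass μ E ≤ mass ν (relImage R E) + (∑ s, μ s - ∑ s, f.fsrc s) := by
  classical
  have h1 : ∑ s, (if s ∈ E then f.fsrc s else 0) ≤ mass ν (relImage R E) := by
    have e1 : ∑ s, (if s ∈ E then f.fsrc s else 0)
        = ∑ t, ∑ s, (if s ∈ E then f.fmid s t else 0) := by
      rw [Finset.sum_comm]
      refine Finset.sum_congr rfl fun s _ => ?_
      rw [f.conserve_left s]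
      split <;> simp
    rw [e1, mass_eq_sum_ite]
    refine Finset.sum_le_sum fun t _ => ?_
    by_cases ht : t ∈ relImage R E
    · rw [if_pos ht]
      calc ∑ s, (if s ∈ E then f.fmid s t else 0) ≤ ∑ s, f.fmid s t := by
            refine Finset.sum_le_sum fun s _ => ?_
            split
            · exact le_refl _
            · exact f.mid_nonneg s t
        _ = f.fsnk t := f.conserve_right t
        _ ≤ ν t := f.snk_cap t
    · rw [if_neg ht]
      have : ∀ s, (if s ∈ E then f.fmid s t else 0) = 0 := by
        intro s
        split
        · exact f.mid_edge s t fun hr => ht ⟨s, ‹s ∈ E›, hr⟩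
        · rfl
      simp [this]
  have h2 : mass μ E - ∑ s, (if s ∈ E then f.fsrc s else 0)
      ≤ ∑ s, μ s - ∑ s, f.fsrc s := by
    rw [mass_eq_sum_ite, ← Finset.sum_sub_distrib, ← Finset.sum_sub_distrib]
    refine Finset.sum_le_sum fun s _ => ?_
    split
    · exact le_refl _
    · have := f.src_cap s; linarith
  linarith

end Aux


section MaxFlowExists

variable {S : Type*} [Fintype S] {μ ν : S → ℝ} {R : S → S → Prop}

lemma exists_max_flow (hμ0 : ∀ s, 0 ≤ μ s) (hν0 : ∀ s, 0 ≤ ν s) :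
    ∃ f : NetworkFlow μ ν R, ∑ s, f.fsrc s = maxFlow μ ν R := by
  classical
  set K : Set ((S → ℝ) × (S → S → ℝ) × (S → ℝ)) :=
    {p | (∀ s, 0 ≤ p.1 s) ∧ (∀ s, p.1 s ≤ μ s) ∧ (∀ s t, 0 ≤ p.2.1 s t) ∧
      (∀ s t, p.2.1 s t ≤ 1) ∧ (∀ s t, ¬ R s t → p.2.1 s t = 0) ∧
      (∀ s, p.1 s = ∑ t, p.2.1 s t) ∧ (∀ t, ∑ s, p.2.1 s t = p.2.2 t) ∧
      (∀ t, 0 ≤ p.2.2 t) ∧ (∀ t, p.2.2 t ≤ ν t)} with hK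
  have hclosed : IsClosed K := by
    have e : K = (⋂ s, {p : (S → ℝ) × (S → S → ℝ) × (S → ℝ) | 0 ≤ p.1 s})
        ∩ ((⋂ s, {p : (S → ℝ) × (S → S → ℝ) × (S → ℝ) | p.1 s ≤ μ s})
        ∩ ((⋂ s, ⋂ t, {p : (S → ℝ) × (S → S → ℝ) × (S → ℝ) | 0 ≤ p.2.1 s t})
        ∩ ((⋂ s, ⋂ t, {p : (S → ℝ) × (S → S → ℝ) × (S → ℝ) | p.2.1 s t ≤ 1})
        ∩ ((⋂ s, ⋂ t, {p : (S → ℝ) × (S → S → ℝ) × (S → ℝ) | ¬ R s t → p.2.1 s t = 0})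
        ∩ ((⋂ s, {p : (S → ℝ) × (S → S → ℝ) × (S → ℝ) | p.1 s = ∑ t, p.2.1 s t})
        ∩ ((⋂ t, {p : (S → ℝ) × (S → S → ℝ) × (S → ℝ) | ∑ s, p.2.1 s t = p.2.2 t})
        ∩ ((⋂ t, {p : (S → ℝ) × (S → S → ℝ) × (S → ℝ) | 0 ≤ p.2.2 t})
        ∩ (⋂ t, {p : (S → ℝ) × (S → S → ℝ) × (S → ℝ) | p.2.2 t ≤ ν t})))))))) := by
      ext p
      simp only [hK, Set.mem_setOf_eq, Set.mem_inter_iff, Set.mem_iInter]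
    rw [e]
    refine IsClosed.inter ?_ (IsClosed.inter ?_ (IsClosed.inter ?_ (IsClosed.inter ?_
      (IsClosed.inter ?_ (IsClosed.inter ?_ (IsClosed.inter ?_ (IsClosed.inter ?_ ?_)))))))
    · exact isClosed_iInter fun s => isClosed_le (by fun_prop) (by fun_prop)
    · exact isClosed_iInter fun s => isClosed_le (by fun_prop) (by fun_prop)
    · exact isClosed_iInter fun s => isClosed_iInter fun t =>
        isClosed_le (by fun_prop) (by fun_prop)
    · exact isClosed_iInter fun s => isClosed_iInter fun t =>
        isClosed_le (by fun_prop) (by fun_prop)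
    · refine isClosed_iInter fun s => isClosed_iInter fun t => ?_
      by_cases h : R s t
      · simp only [h, not_true_eq_false, false_implies, Set.setOf_true]
        exact isClosed_univ
      · simp only [h, not_false_eq_true, true_implies]
        exact isClosed_eq (by fun_prop) continuous_const
    · exact isClosed_iInter fun s => isClosed_eq (by fun_prop)
        (continuous_finset_sum _ fun t _ => by fun_prop)
    · exact isClosed_iInter fun t => isClosed_eq
        (continuous_finset_sum _ fun s _ => by fun_prop) (by fun_prop)
    · exact isClosed_iInter fun t => isClosed_le (by fun_prop) (by fun_prop)
    · exact isClosed_iInter fun t => isClosed_le (by fun_prop) (by fun_prop)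
  have hsub : K ⊆ Set.Icc (0, 0, 0) (μ, fun _ _ => 1, ν) := by
    rintro p ⟨h1, h2, h3, h4, _, _, _, h8, h9⟩
    constructor
    · exact ⟨h1, fun s t => h3 s t, h8⟩
    · exact ⟨h2, fun s t => h4 s t, h9⟩
  have hcpt : IsCompact K := IsCompact.of_isClosed_subset isCompact_Icc hclosed hsub
  have hne : K.Nonempty := by
    refine ⟨(0, 0, 0), ?_⟩
    refine ⟨fun _ => le_refl 0, hμ0, fun _ _ => le_refl 0, fun _ _ => zero_le_one,
      fun _ _ _ => rfl, by simp, by simp, fun _ => le_refl 0, hν0⟩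
  have hcont : ContinuousOn (fun p : (S → ℝ) × (S → S → ℝ) × (S → ℝ) => ∑ s, p.1 s) K :=
    (continuous_finset_sum _ fun s _ => by fun_prop).continuousOn
  obtain ⟨x, hxK, hmax⟩ := hcpt.exists_isMaxOn hne hcont
  obtain ⟨h1, h2, h3, h4, h5, h6, h7, h8, h9⟩ := hxK
  refine ⟨⟨x.1, x.2.1, x.2.2, h1, h2, h3, h4, h5, h6, h7, h8, h9⟩, ?_⟩
  have hgr : IsGreatest {v | ∃ f : NetworkFlow μ ν R, v = ∑ s, f.fsrc s} (∑ s, x.1 s) := by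
    constructor
    · exact ⟨⟨x.1, x.2.1, x.2.2, h1, h2, h3, h4, h5, h6, h7, h8, h9⟩, rfl⟩
    · rintro v ⟨g, rfl⟩
      have hg : (g.fsrc, g.fmid, g.fsnk) ∈ K :=
        ⟨g.src_nonneg, g.src_cap, g.mid_nonneg, g.mid_cap, g.mid_edge,
          g.conserve_left, g.conserve_right, g.snk_nonneg, g.snk_cap⟩
      exact hmax hg
  exact (hgr.csSup_eq).symm

end MaxFlowExists



section Augment

variable {S : Type*} [Fintype S] {μ ν : S → ℝ} {R : S → S → Prop}

inductive Reach (f : NetworkFlow μ ν R) : S ⊕ S → Prop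
  | src (s : S) : f.fsrc s < μ s → Reach f (Sum.inl s)
  | fwd (s t : S) : Reach f (Sum.inl s) → R s t → Reach f (Sum.inr t)
  | bwd (t s : S) : Reach f (Sum.inr t) → 0 < f.fmid s t → Reach f (Sum.inl s)

lemma reach_push [DecidableEq S] (hμ1 : ∀ a, μ a ≤ 1) {f : NetworkFlow μ ν R}
    {v : S ⊕ S} (h : Reach f v) :
    ∀ ε0 > 0, ∃ δ, 0 < δ ∧ δ ≤ ε0 ∧ ∃ (fs : S → ℝ) (fm : S → S → ℝ),
      (∀ a, 0 ≤ fs a) ∧ (∀ a, fs a ≤ μ a) ∧ (∀ a b, 0 ≤ fm a b) ∧ (∀ a b, fm a b ≤ 1) ∧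
      (∀ a b, ¬ R a b → fm a b = 0) ∧ (∀ a b, f.fmid a b - ε0 ≤ fm a b) ∧
      (∀ a, fs a = (∑ b, fm a b) + (if (Sum.inl a : S ⊕ S) = v then δ else 0)) ∧
      (∀ b, ∑ a, fm a b = f.fsnk b + (if (Sum.inr b : S ⊕ S) = v then δ else 0)) := by
  induction h with
  | src s hs =>
    intro ε0 hε0
    refine ⟨min ε0 (μ s - f.fsrc s), lt_min hε0 (by linarith), min_le_left _ _,
      fun a => f.fsrc a + if a = s then min ε0 (μ s - f.fsrc s) else 0, f.fmid,
      ?_, ?_, f.mid_nonneg, f.mid_cap, f.mid_edge, fun a b => by linarith [hε0], ?_, ?_⟩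
    · intro a
      have := f.src_nonneg a
      dsimp only
      split
      · have : (0:ℝ) ≤ min ε0 (μ s - f.fsrc s) := le_of_lt (lt_min hε0 (by linarith))
        linarith
      · linarith
    · intro a
      dsimp only
      split
      · rename_i ha
        subst ha
        have := min_le_right ε0 (μ a - f.fsrc a)
        linarith
      · have := f.src_cap a
        linarith
    · intro a
      dsimp only
      rw [f.conserve_left a]
      simp [Sum.inl.injEq]
    · intro b
      rw [f.conserve_right b]
      simp
  | fwd s t hreach hR ih =>
    intro ε0 hε0
    obtain ⟨δ, hδ, hδε, fs, fm, hfs0, hfsμ, hfm0, hfm1, hfmR, hfminv, hcons, hsnk⟩ := ih ε0 hε0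
    refine ⟨δ, hδ, hδε, fs, fun a b => fm a b + if a = s ∧ b = t then δ else 0,
      hfs0, hfsμ, ?_, ?_, ?_, ?_, ?_, ?_⟩
    · intro a b
      have := hfm0 a b
      dsimp only
      split
      · linarith
      · linarith
    · intro a b
      dsimp only
      split
      · rename_i hab
        obtain ⟨ha, hb⟩ := hab
        subst ha; subst hb
        have h1 : fm a b ≤ ∑ b', fm a b' :=
          Finset.single_le_sum (fun b' _ => hfm0 a b') (Finset.mem_univ b)
        have h2 : fs a = (∑ b', fm a b') + δ := by
          have := hcons a
          simpa using this
        have := hfsμ a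
        have := hμ1 a
        linarith
      · have := hfm1 a b
        linarith
    · intro a b hab
      dsimp only
      split
      · rename_i h'
        exact absurd (h'.1 ▸ h'.2 ▸ hR) hab
      · rw [hfmR a b hab, add_zero]
    · intro a b
      have := hfminv a b
      dsimp only
      split
      · linarith
      · linarith
    · intro a
      dsimp only
      rw [Finset.sum_add_distrib]
      by_cases ha : a = s
      · subst ha
        have := hcons a
        simp only [Sum.inl.injEq, if_pos rfl] at this
        simp [this]
      · have := hcons a
        simp only [Sum.inl.injEq, ha, if_false] at this
        simp [ha, this]
    · intro b
      dsimp only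
      rw [Finset.sum_add_distrib]
      by_cases hb : b = t
      · subst hb
        have := hsnk b
        simp at this
        simp [this]
      · have := hsnk b
        simp at this
        simp [hb, this]
  | bwd t s hreach hpos ih =>
    intro ε0 hε0
    have hRst : R s t := by
      by_contra hR
      rw [f.mid_edge s t hR] at hpos
      exact lt_irrefl 0 hpos
    set ε1 : ℝ := min ε0 (f.fmid s t) / 2 with hε1
    have hε1pos : 0 < ε1 := by
      have := f.mid_nonneg s t
      have : 0 < min ε0 (f.fmid s t) := lt_min hε0 hpos
      positivity
    obtain ⟨δ, hδ, hδε, fs, fm, hfs0, hfsμ, hfm0, hfm1, hfmR, hfminv, hcons, hsnk⟩ :=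
      ih ε1 hε1pos
    have h2ε1a : 2 * ε1 ≤ ε0 := by
      have := min_le_left ε0 (f.fmid s t)
      rw [hε1]; linarith
    have h2ε1b : 2 * ε1 ≤ f.fmid s t := by
      have := min_le_right ε0 (f.fmid s t)
      rw [hε1]; linarith
    refine ⟨δ, hδ, by linarith, fs, fun a b => fm a b - if a = s ∧ b = t then δ else 0,
      hfs0, hfsμ, ?_, ?_, ?_, ?_, ?_, ?_⟩
    · intro a b
      dsimp only
      split
      · rename_i hab
        obtain ⟨ha, hb⟩ := hab
        subst ha; subst hb
        have := hfminv a b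
        linarith
      · have := hfm0 a b; linarith
    · intro a b
      have := hfm1 a b
      dsimp only
      split
      · linarith
      · linarith
    · intro a b hab
      dsimp only
      split
      · rename_i h'
        exact absurd (h'.1 ▸ h'.2 ▸ hRst) hab
      · rw [hfmR a b hab, sub_zero]
    · intro a b
      have := hfminv a b
      dsimp only
      split
      · linarith
      · linarith
    · intro a
      dsimp only
      rw [Finset.sum_sub_distrib]
      by_cases ha : a = s
      · subst ha
        have := hcons a
        simp only [Sum.inl.injEq, reduceCtorEq, if_false, add_zero] at this
        simp [this]
      · have := hcons a
        simp only [Sum.inl.injEq, reduceCtorEq, if_false, add_zero] at this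
        simp [ha, this]
    · intro b
      dsimp only
      rw [Finset.sum_sub_distrib]
      by_cases hb : b = t
      · subst hb
        have := hsnk b
        simp only [Sum.inr.injEq, if_pos rfl] at this
        simp [this]
      · have := hsnk b
        simp only [Sum.inr.injEq, hb, if_false, add_zero] at this
        simp [hb, this]

lemma reach_snk_full (hμ1 : ∀ a, μ a ≤ 1) {f : NetworkFlow μ ν R}
    (hopt : ∀ g : NetworkFlow μ ν R, ∑ s, g.fsrc s ≤ ∑ s, f.fsrc s)
    {t : S} (h : Reach f (Sum.inr t)) : f.fsnk t = ν t := by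
  classical
  by_contra hne
  have hlt : f.fsnk t < ν t := lt_of_le_of_ne (f.snk_cap t) hne
  obtain ⟨δ, hδ, hδε, fs, fm, hfs0, hfsμ, hfm0, hfm1, hfmR, hfminv, hcons, hsnk⟩ :=
    reach_push hμ1 h (ν t - f.fsnk t) (by linarith)
  have hcons' : ∀ a, fs a = ∑ b, fm a b := by
    intro a
    have := hcons a
    simpa using this
  have hsnk' : ∀ b, ∑ a, fm a b = f.fsnk b + (if b = t then δ else 0) := by
    intro b
    have := hsnk b
    simpa using this
  have hsnk0 : ∀ b, 0 ≤ f.fsnk b + (if b = t then δ else 0) := by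
    intro b
    have := f.snk_nonneg b
    split <;> linarith
  have hsnkcap : ∀ b, f.fsnk b + (if b = t then δ else 0) ≤ ν b := by
    intro b
    split
    · rename_i hb
      subst hb
      linarith
    · have := f.snk_cap b
      linarith
  have hval : ∑ a, fs a = (∑ b, f.fsnk b) + δ := by
    calc ∑ a, fs a = ∑ a, ∑ b, fm a b := Finset.sum_congr rfl fun a _ => hcons' a
      _ = ∑ b, ∑ a, fm a b := Finset.sum_comm
      _ = ∑ b, (f.fsnk b + if b = t then δ else 0) :=
          Finset.sum_congr rfl fun b _ => hsnk' b
      _ = (∑ b, f.fsnk b) + δ := by rw [Finset.sum_add_distrib]; simp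
  have hfval : ∑ a, f.fsrc a = ∑ b, f.fsnk b := by
    calc ∑ a, f.fsrc a = ∑ a, ∑ b, f.fmid a b :=
          Finset.sum_congr rfl fun a _ => f.conserve_left a
      _ = ∑ b, ∑ a, f.fmid a b := Finset.sum_comm
      _ = ∑ b, f.fsnk b := Finset.sum_congr rfl fun b _ => f.conserve_right b
  have := hopt ⟨fs, fm, fun b => f.fsnk b + if b = t then δ else 0, hfs0, hfsμ, hfm0, hfm1,
    hfmR, hcons', hsnk', hsnk0, hsnkcap⟩
  simp only at this
  rw [hval, ← hfval] at this
  linarith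

end Augment

/-- μ L^ε(R) ν iff the maximal flow in N(μ, ν, R) is at least μ(S) − ε. -/
theorem lift_iff_maxflow {S : Type*} [Fintype S]
    (R : S → S → Prop) (μ ν : S → ℝ) (ε : ℝ)
    (hμ : IsSubdist μ) (hν : IsSubdist ν) (hε : 0 ≤ ε) :
    Lift ε R μ ν ↔ mass μ Set.univ - ε ≤ maxFlow μ ν R := by
  classical
  have hμ0 := hμ.1
  have hν0 := hν.1
  have hmassuniv : mass μ Set.univ = ∑ s, μ s := by simp [mass]
  constructor
  · intro hLift
    obtain ⟨f, hf⟩ := exists_max_flow (μ := μ) (ν := ν) (R := R) hμ0 hν0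
    have hopt : ∀ g : NetworkFlow μ ν R, ∑ s, g.fsrc s ≤ ∑ s, f.fsrc s := by
      intro g
      rw [hf]
      exact le_csSup flowValues_bddAbove ⟨g, rfl⟩
    have hμ1 : ∀ a, μ a ≤ 1 := fun a =>
      le_trans (Finset.single_le_sum (fun s _ => hμ0 s) (Finset.mem_univ a)) hμ.2
    set E : Set S := {s | Reach f (Sum.inl s)} with hE
    have hF : ∀ t, t ∈ relImage R E ↔ Reach f (Sum.inr t) := by
      intro t
      constructor
      · rintro ⟨s, hs, hR⟩
        exact Reach.fwd s t hs hR
      · intro h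
        cases h with
        | fwd s t hs hR => exact ⟨s, hs, hR⟩
    have hsat : ∀ s, s ∉ E → f.fsrc s = μ s := by
      intro s hs
      by_contra hne
      exact hs (Reach.src s (lt_of_le_of_ne (f.src_cap s) hne))
    have hzero : ∀ s t, s ∉ E → t ∈ relImage R E → f.fmid s t = 0 := by
      intro s t hs ht
      by_contra h0
      exact hs (Reach.bwd t s ((hF t).1 ht) (lt_of_le_of_ne (f.mid_nonneg s t) (Ne.symm h0)))
    have hfull : ∀ t, t ∈ relImage R E → f.fsnk t = ν t := fun t ht =>
      reach_snk_full hμ1 hopt ((hF t).1 ht)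
    have hsplit : ∑ s, f.fsrc s
        = (∑ s, if s ∈ E then f.fsrc s else 0) + ∑ s, (if s ∈ E then 0 else μ s) := by
      rw [← Finset.sum_add_distrib]
      refine Finset.sum_congr rfl fun s _ => ?_
      by_cases hs : s ∈ E
      · simp [hs]
      · simp [hs, hsat s hs]
    have hA : mass ν (relImage R E) ≤ ∑ s, if s ∈ E then f.fsrc s else 0 := by
      have e1 : ∑ s, (if s ∈ E then f.fsrc s else 0)
          = ∑ t, ∑ s, (if s ∈ E then f.fmid s t else 0) := by
        rw [Finset.sum_comm]
        refine Finset.sum_congr rfl fun s _ => ?_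
        rw [f.conserve_left s]
        split <;> simp
      rw [e1, mass_eq_sum_ite]
      refine Finset.sum_le_sum fun t _ => ?_
      by_cases ht : t ∈ relImage R E
      · rw [if_pos ht]
        have e2 : ∑ s, (if s ∈ E then f.fmid s t else 0) = ∑ s, f.fmid s t := by
          refine Finset.sum_congr rfl fun s _ => ?_
          by_cases hs : s ∈ E
          · simp [hs]
          · simp [hs, hzero s t hs ht]
        rw [e2, f.conserve_right t, hfull t ht]
      · rw [if_neg ht]
        refine Finset.sum_nonneg fun s _ => ?_
        by_cases hs : s ∈ E
        · rw [if_pos hs]; exact f.mid_nonneg s t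
        · rw [if_neg hs]
    have hB : ∑ s, (if s ∈ E then 0 else μ s) = ∑ s, μ s - mass μ E := by
      rw [mass_eq_sum_ite, ← Finset.sum_sub_distrib]
      refine Finset.sum_congr rfl fun s _ => ?_
      by_cases hs : s ∈ E
      · simp [hs]
      · simp [hs]
    have hLE := hLift E
    rw [hmassuniv, ← hf]
    linarith
  · intro hge E
    have hub : maxFlow μ ν R ≤ ∑ s, μ s - (mass μ E - mass ν (relImage R E)) := by
      apply csSup_le (flowValues_nonempty hμ0 hν0)
      rintro v ⟨f, rfl⟩
      have := cut_bound f E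
      linarith
    rw [hmassuniv] at hge
    linarith
end

section
/- Let (S, Act, D) be a probabilistic automaton. A relation R is a 0-simulation (ε-simulation with ε = 0) if and only if R is a classical probabilistic simulation: whenever s R t and (s, a, μ) ∈ D, there exists (t, a, ν) ∈ D and a weight function δ : S × S → [0,1] with δ(x,y) > 0 → x R y, ∑_y δ(x,y) = μ(x) for all x (assuming S finite), ∑_x δ(x,y) ≤ ν(y) for all y. -/
open Finset

def IsEpsSim {S Act : Type*} [Fintype S] (D : S → Act → (S → ℝ) → Prop) (ε : ℝ)
    (R : S → S → Prop) : Prop :=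
  ∀ s t, R s t → ∀ a μ, D s a μ → ∃ ν, D t a ν ∧ Lift ε R μ ν

section Aux

open scoped Classical

variable {S : Type*} [Fintype S]

/-- Feasible sub-couplings for the transportation problem. -/
def Feas (R : S → S → Prop) (μ ν : S → ℝ) (δ : S → S → ℝ) : Prop :=
  (∀ x y, 0 ≤ δ x y) ∧ (∀ x y, ¬ R x y → δ x y = 0) ∧
    (∀ x, ∑ y, δ x y ≤ μ x) ∧ (∀ y, ∑ x, δ x y ≤ ν y)

lemma mass_eq_filter (μ : S → ℝ) (E : Set S) :
    mass μ E = ∑ x ∈ univ.filter (· ∈ E), μ x := by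
  rw [Finset.sum_filter]
  exact Finset.sum_congr rfl fun x _ => Set.indicator_apply E μ x

lemma sum_ite_and_right (p a b : S) (ε : ℝ) :
    (∑ q, if p = a ∧ q = b then ε else 0) = if p = a then ε else 0 := by
  by_cases hp : p = a
  · simp [hp]
  · simp [hp]

lemma sum_ite_and_left (a b q : S) (ε : ℝ) :
    (∑ p, if p = a ∧ q = b then ε else 0) = if q = b then ε else 0 := by
  by_cases hq : q = b
  · simp [hq]
  · simp [hq]

/-- Alternating paths from `x0`. -/
def pathN (R : S → S → Prop) (δ : S → S → ℝ) (x0 : S) : ℕ → S → Prop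
  | 0, x => x = x0
  | n + 1, x => ∃ x' y', pathN R δ x0 n x' ∧ R x' y' ∧ 0 < δ x y'

set_option linter.unusedSectionVars false in
lemma pathN_mono {R : S → S → Prop} {δ δ' : S → S → ℝ} {x0 : S}
    (h : ∀ p q, 0 < δ p q → 0 < δ' p q) :
    ∀ n x, pathN R δ x0 n x → pathN R δ' x0 n x := by
  intro n
  induction n with
  | zero => intro x hx; exact hx
  | succ n ih =>
      rintro x ⟨x', y', hp, hR, hpos⟩
      exact ⟨x', y', ih x' hp, hR, h _ _ hpos⟩

/-- Augmenting-path lemma: if some column reachable by an alternating path from an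
unsaturated row is unsaturated, the total mass can be strictly increased. -/
lemma aug {R : S → S → Prop} {μ ν : S → ℝ} {x0 : S} :
    ∀ (n : ℕ) (δ : S → S → ℝ), Feas R μ ν δ → (∑ y, δ x0 y) < μ x0 →
      ∀ x y, pathN R δ x0 n x → R x y → (∑ x', δ x' y) < ν y →
      ∃ δ', Feas R μ ν δ' ∧ (∑ p, ∑ q, δ p q) < ∑ p, ∑ q, δ' p q := by
  intro n
  induction n with
  | zero =>
    intro δ hF hrow x y hx hR hcol
    have hx' : x = x0 := hx
    subst hx'
    set ε := min (μ x - ∑ y', δ x y') (ν y - ∑ x', δ x' y) with hεdef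
    have hε0 : 0 < ε := lt_min (by linarith) (by linarith)
    have hε1 : ε ≤ μ x - ∑ y', δ x y' := min_le_left _ _
    have hε2 : ε ≤ ν y - ∑ x', δ x' y := min_le_right _ _
    set δ' : S → S → ℝ := fun p q => δ p q + if p = x ∧ q = y then ε else 0 with hδ'def
    have hval : ∀ p q, δ' p q = δ p q + if p = x ∧ q = y then ε else 0 := fun p q => rfl
    have hrowval : ∀ p, (∑ q, δ' p q) = (∑ q, δ p q) + if p = x then ε else 0 := by
      intro p
      simp only [hδ'def]
      rw [Finset.sum_add_distrib, sum_ite_and_right]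
    have hcolval : ∀ q, (∑ p, δ' p q) = (∑ p, δ p q) + if q = y then ε else 0 := by
      intro q
      simp only [hδ'def]
      rw [Finset.sum_add_distrib, sum_ite_and_left]
    refine ⟨δ', ⟨?_, ?_, ?_, ?_⟩, ?_⟩
    · intro p q
      rw [hval]
      have := hF.1 p q
      split_ifs <;> linarith
    · intro p q hnR
      have h1 := hF.2.1 p q hnR
      have h2 : ¬ (p = x ∧ q = y) := by rintro ⟨rfl, rfl⟩; exact hnR hR
      rw [hval, if_neg h2, h1, add_zero]
    · intro p
      rw [hrowval]
      by_cases hp : p = x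
      · rw [if_pos hp, hp]; linarith
      · rw [if_neg hp, add_zero]; exact hF.2.2.1 p
    · intro q
      rw [hcolval]
      by_cases hq : q = y
      · rw [if_pos hq, hq]; linarith
      · rw [if_neg hq, add_zero]; exact hF.2.2.2 q
    · have hfe : (∑ p, ∑ q, δ' p q) = (∑ p, ∑ q, δ p q) + ε := by
        rw [Finset.sum_congr rfl fun p _ => hrowval p, Finset.sum_add_distrib]
        simp
      rw [hfe]; linarith
  | succ n ih =>
    intro δ hF hrow x y hx hR hcol
    obtain ⟨x', y', hp, hR', hpos⟩ := hx
    by_cases hyy : y' = y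
    · subst hyy; exact ih δ hF hrow x' y' hp hR' hcol
    · have hRxy' : R x y' := by
        by_contra hn
        have := hF.2.1 x y' hn
        linarith
      set ε := min (δ x y') (ν y - ∑ x'', δ x'' y) / 2 with hεdef
      have hε0 : 0 < ε := div_pos (lt_min hpos (by linarith)) two_pos
      have hε1 : ε ≤ δ x y' / 2 := by
        rw [hεdef]
        have := min_le_left (δ x y') (ν y - ∑ x'', δ x'' y)
        linarith
      have hε2 : ε ≤ (ν y - ∑ x'', δ x'' y) / 2 := by
        rw [hεdef]
        have := min_le_right (δ x y') (ν y - ∑ x'', δ x'' y)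
        linarith
      set δ' : S → S → ℝ := fun p q =>
        δ p q + (if p = x ∧ q = y then ε else 0) - (if p = x ∧ q = y' then ε else 0) with hδ'def
      have hne2 : ∀ p q, ¬ (p = x ∧ q = y) → ¬ (p = x ∧ q = y') → δ' p q = δ p q := by
        intro p q h1 h2; simp [hδ'def, h1, h2]
      have hval1 : δ' x y = δ x y + ε := by
        have h2 : y ≠ y' := fun h => hyy h.symm
        simp [hδ'def, h2]
      have hval2 : δ' x y' = δ x y' - ε := by
        simp [hδ'def, hyy]
      have hpres : ∀ p q, 0 < δ p q → 0 < δ' p q := by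
        intro p q h
        by_cases h1 : p = x ∧ q = y
        · rw [h1.1, h1.2] at h ⊢; rw [hval1]; linarith
        · by_cases h2 : p = x ∧ q = y'
          · rw [h2.1, h2.2] at h ⊢; rw [hval2]; linarith
          · rw [hne2 p q h1 h2]; exact h
      have hrowfix : ∀ p, (∑ q, δ' p q) = ∑ q, δ p q := by
        intro p
        simp only [hδ'def]
        rw [Finset.sum_sub_distrib, Finset.sum_add_distrib, sum_ite_and_right,
          sum_ite_and_right]
        ring
      have hcolfix : ∀ q, (∑ p, δ' p q)
          = (∑ p, δ p q) + (if q = y then ε else 0) - (if q = y' then ε else 0) := by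
        intro q
        simp only [hδ'def]
        rw [Finset.sum_sub_distrib, Finset.sum_add_distrib, sum_ite_and_left,
          sum_ite_and_left]
      have hF' : Feas R μ ν δ' := by
        refine ⟨?_, ?_, ?_, ?_⟩
        · intro p q
          by_cases h1 : p = x ∧ q = y
          · rw [h1.1, h1.2, hval1]; have := hF.1 x y; linarith
          · by_cases h2 : p = x ∧ q = y'
            · rw [h2.1, h2.2, hval2]; linarith
            · rw [hne2 p q h1 h2]; exact hF.1 p q
        · intro p q hnR
          have h1 : ¬ (p = x ∧ q = y) := by rintro ⟨rfl, rfl⟩; exact hnR hR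
          have h2 : ¬ (p = x ∧ q = y') := by rintro ⟨rfl, rfl⟩; exact hnR hRxy'
          rw [hne2 p q h1 h2]; exact hF.2.1 p q hnR
        · intro p; rw [hrowfix]; exact hF.2.2.1 p
        · intro w
          rw [hcolfix]
          by_cases hw : w = y
          · rw [if_pos hw, if_neg (show ¬ w = y' from fun h => hyy (by rw [← h, hw])), hw]
            have := hF.2.2.2 y
            linarith
          · rw [if_neg hw]
            by_cases hw' : w = y'
            · rw [if_pos hw', hw']
              have := hF.2.2.2 y'
              linarith
            · rw [if_neg hw']
              have := hF.2.2.2 w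
              linarith
      have hrow' : (∑ q, δ' x0 q) < μ x0 := by rw [hrowfix]; exact hrow
      have hslack' : (∑ p, δ' p y') < ν y' := by
        rw [hcolfix]
        rw [if_neg (fun h : y' = y => hyy h), if_pos rfl]
        have := hF.2.2.2 y'
        linarith
      obtain ⟨δ'', hF'', hlt⟩ :=
        ih δ' hF' hrow' x' y' (pathN_mono hpres n x' hp) hR' hslack'
      have hfeq : (∑ p, ∑ q, δ' p q) = ∑ p, ∑ q, δ p q :=
        Finset.sum_congr rfl fun p _ => hrowfix p
      exact ⟨δ'', hF'', by linarith⟩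

lemma exists_max_feas (R : S → S → Prop) (μ ν : S → ℝ)
    (hμ : IsSubdist μ) (hν : IsSubdist ν) :
    ∃ δ, Feas R μ ν δ ∧
      ∀ δ', Feas R μ ν δ' → (∑ p, ∑ q, δ' p q) ≤ ∑ p, ∑ q, δ p q := by
  set K : Set (S → S → ℝ) := {δ | Feas R μ ν δ} with hK
  have hne : K.Nonempty :=
    ⟨fun _ _ => 0, fun _ _ => le_rfl, fun _ _ _ => rfl,
      fun x => by simpa using hμ.1 x, fun y => by simpa using hν.1 y⟩
  have h1 : IsClosed {δ : S → S → ℝ | ∀ x y, 0 ≤ δ x y} := by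
    rw [Set.setOf_forall]
    refine isClosed_iInter fun x => ?_
    rw [Set.setOf_forall]
    exact isClosed_iInter fun y =>
      isClosed_le continuous_const ((continuous_apply y).comp (continuous_apply x))
  have h2 : IsClosed {δ : S → S → ℝ | ∀ x y, ¬ R x y → δ x y = 0} := by
    rw [Set.setOf_forall]
    refine isClosed_iInter fun x => ?_
    rw [Set.setOf_forall]
    refine isClosed_iInter fun y => ?_
    by_cases hxy : R x y
    · convert isClosed_univ
      ext δ; simp [hxy]
    · have : {δ : S → S → ℝ | ¬ R x y → δ x y = 0} = {δ | δ x y = 0} := by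
        ext δ; simp [hxy]
      rw [this]
      exact isClosed_eq ((continuous_apply y).comp (continuous_apply x)) continuous_const
  have h3 : IsClosed {δ : S → S → ℝ | ∀ x, ∑ y, δ x y ≤ μ x} := by
    rw [Set.setOf_forall]
    refine isClosed_iInter fun x => ?_
    exact isClosed_le
      (continuous_finset_sum _ fun y _ => (continuous_apply y).comp (continuous_apply x))
      continuous_const
  have h4 : IsClosed {δ : S → S → ℝ | ∀ y, ∑ x, δ x y ≤ ν y} := by
    rw [Set.setOf_forall]
    refine isClosed_iInter fun y => ?_
    exact isClosed_le
      (continuous_finset_sum _ fun x _ => (continuous_apply y).comp (continuous_apply x))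
      continuous_const
  have hcl : IsClosed K :=
    h1.inter (h2.inter (h3.inter h4))
  have hsub : K ⊆ Set.pi Set.univ
      (fun _ : S => Set.pi Set.univ fun _ : S => Set.Icc (0 : ℝ) 1) := by
    rintro δ ⟨hnn, hsupp, hrows, hcols⟩ x _
    intro y _
    refine ⟨hnn x y, ?_⟩
    have hA : δ x y ≤ ∑ q, δ x q := Finset.single_le_sum (fun q _ => hnn x q) (mem_univ y)
    have hB : μ x ≤ ∑ s, μ s := Finset.single_le_sum (fun s _ => hμ.1 s) (mem_univ x)
    linarith [hrows x, hμ.2]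
  have hcpt : IsCompact K :=
    (isCompact_univ_pi fun _ => isCompact_univ_pi fun _ => isCompact_Icc).of_isClosed_subset
      hcl hsub
  have hcont : Continuous fun δ : S → S → ℝ => ∑ p, ∑ q, δ p q :=
    continuous_finset_sum _ fun p _ =>
      continuous_finset_sum _ fun q _ => (continuous_apply q).comp (continuous_apply p)
  obtain ⟨δ, hδK, hmax⟩ := hcpt.exists_isMaxOn hne hcont.continuousOn
  exact ⟨δ, hδK, fun δ' hδ' => hmax hδ'⟩

lemma exists_weight (R : S → S → Prop) (μ ν : S → ℝ) (hμ : IsSubdist μ) (hν : IsSubdist ν)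
    (hL : Lift 0 R μ ν) : ∃ δ, Feas R μ ν δ ∧ ∀ x, ∑ y, δ x y = μ x := by
  obtain ⟨δ, hF, hmax⟩ := exists_max_feas R μ ν hμ hν
  refine ⟨δ, hF, fun x0 => ?_⟩
  by_contra hne
  have hrow : (∑ y, δ x0 y) < μ x0 := lt_of_le_of_ne (hF.2.2.1 x0) hne
  set Aset : Set S := {x | ∃ n, pathN R δ x0 n x} with hAdef
  have hsat : ∀ y ∈ relImage R Aset, (∑ x, δ x y) = ν y := by
    rintro y ⟨x, ⟨n, hx⟩, hR⟩
    by_contra hcne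
    have hcol : (∑ x', δ x' y) < ν y := lt_of_le_of_ne (hF.2.2.2 y) hcne
    obtain ⟨δ', hF', hlt⟩ := aug n δ hF hrow x y hx hR hcol
    exact absurd (hmax δ' hF') (not_le.mpr hlt)
  have hx0A : x0 ∈ Aset := ⟨0, rfl⟩
  set Af := univ.filter (· ∈ Aset) with hAf
  set Bf := univ.filter (· ∈ relImage R Aset) with hBf
  have key1 : mass ν (relImage R Aset) = ∑ y ∈ Bf, ∑ x, δ x y := by
    rw [mass_eq_filter, ← hBf]
    exact Finset.sum_congr rfl fun y hy => (hsat y (mem_filter.mp hy).2).symm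
  have key2 : (∑ y ∈ Bf, ∑ x, δ x y) = ∑ x ∈ Af, ∑ y ∈ Bf, δ x y := by
    rw [Finset.sum_comm]
    rw [← Finset.sum_filter_add_sum_filter_not univ (· ∈ Aset) (fun x => ∑ y ∈ Bf, δ x y)]
    have hz : (∑ x ∈ univ.filter (fun x => ¬ x ∈ Aset), ∑ y ∈ Bf, δ x y) = 0 := by
      refine Finset.sum_eq_zero fun x hx => Finset.sum_eq_zero fun y hy => ?_
      have hxA : x ∉ Aset := (mem_filter.mp hx).2
      have hyB : y ∈ relImage R Aset := (mem_filter.mp hy).2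
      by_contra hne0
      have hpos : 0 < δ x y := lt_of_le_of_ne (hF.1 x y) (Ne.symm hne0)
      obtain ⟨x', hx'A, hRx'y⟩ := hyB
      obtain ⟨n, hp⟩ := hx'A
      exact hxA ⟨n + 1, x', y, hp, hRx'y, hpos⟩
    rw [hz, add_zero, hAf]
  have key3 : (∑ x ∈ Af, ∑ y ∈ Bf, δ x y) ≤ ∑ x ∈ Af, ∑ y, δ x y :=
    Finset.sum_le_sum fun x _ =>
      Finset.sum_le_sum_of_subset_of_nonneg (Finset.filter_subset _ _)
        fun y _ _ => hF.1 x y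
  have key4 : (∑ x ∈ Af, ∑ y, δ x y) < ∑ x ∈ Af, μ x := by
    refine Finset.sum_lt_sum (fun x _ => hF.2.2.1 x) ⟨x0, ?_, hrow⟩
    rw [hAf]; exact mem_filter.mpr ⟨mem_univ x0, hx0A⟩
  have key5 : mass μ Aset ≤ mass ν (relImage R Aset) + 0 := hL Aset
  rw [mass_eq_filter, ← hAf] at key5
  linarith
end Aux

section Dir

open scoped Classical

variable {S : Type*} [Fintype S]

lemma lift_of_weight (R : S → S → Prop) (μ ν : S → ℝ) (δ : S → S → ℝ)
    (hnn : ∀ x y, 0 ≤ δ x y) (hsupp : ∀ x y, 0 < δ x y → R x y)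
    (hrow : ∀ x, ∑ y, δ x y = μ x) (hcol : ∀ y, ∑ x, δ x y ≤ ν y) :
    Lift 0 R μ ν := by
  intro E
  rw [mass_eq_filter, mass_eq_filter, add_zero]
  calc (∑ x ∈ univ.filter (· ∈ E), μ x)
      = ∑ x ∈ univ.filter (· ∈ E), ∑ y, δ x y :=
        Finset.sum_congr rfl fun x _ => (hrow x).symm
    _ = ∑ x ∈ univ.filter (· ∈ E), ∑ y ∈ univ.filter (· ∈ relImage R E), δ x y := by
        refine Finset.sum_congr rfl fun x hx => ?_
        rw [← Finset.sum_filter_add_sum_filter_not univ (· ∈ relImage R E) (δ x)]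
        have hz : (∑ y ∈ univ.filter (fun y => ¬ y ∈ relImage R E), δ x y) = 0 := by
          refine Finset.sum_eq_zero fun y hy => ?_
          by_contra h0
          have hpos : 0 < δ x y := lt_of_le_of_ne (hnn x y) (Ne.symm h0)
          exact (mem_filter.mp hy).2 ⟨x, (mem_filter.mp hx).2, hsupp x y hpos⟩
        rw [hz, add_zero]
    _ = ∑ y ∈ univ.filter (· ∈ relImage R E), ∑ x ∈ univ.filter (· ∈ E), δ x y :=
        Finset.sum_comm
    _ ≤ ∑ y ∈ univ.filter (· ∈ relImage R E), ∑ x, δ x y :=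
        Finset.sum_le_sum fun y _ =>
          Finset.sum_le_sum_of_subset_of_nonneg (Finset.filter_subset _ _)
            fun x _ _ => hnn x y
    _ ≤ ∑ y ∈ univ.filter (· ∈ relImage R E), ν y :=
        Finset.sum_le_sum fun y _ => hcol y

end Dir

/-- R is a 0-simulation iff it is a classical probabilistic simulation, defined
    via weight functions. -/
theorem zero_sim_iff_classical {S Act : Type*} [Fintype S]
    (D : S → Act → (S → ℝ) → Prop)
    (hD : ∀ s a μ, D s a μ → IsSubdist μ)
    (R : S → S → Prop) :
    IsEpsSim D 0 R ↔
      (∀ s t, R s t → ∀ a μ, D s a μ → ∃ ν, D t a ν ∧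
        ∃ δ : S → S → ℝ,
          (∀ x y, 0 ≤ δ x y ∧ δ x y ≤ 1) ∧
          (∀ x y, 0 < δ x y → R x y) ∧
          (∀ x, ∑ y, δ x y = μ x) ∧
          (∀ y, ∑ x, δ x y ≤ ν y)) := by
  classical
  constructor
  · intro hsim s t hst a μ hDs
    obtain ⟨ν, hDt, hLift⟩ := hsim s t hst a μ hDs
    obtain ⟨δ, hF, hrow⟩ := exists_weight R μ ν (hD s a μ hDs) (hD t a ν hDt) hLift
    refine ⟨ν, hDt, δ, ?_, ?_, hrow, hF.2.2.2⟩
    · intro x y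
      refine ⟨hF.1 x y, ?_⟩
      have hsubμ := hD s a μ hDs
      have hA : δ x y ≤ ∑ q, δ x q := Finset.single_le_sum (fun q _ => hF.1 x q) (mem_univ y)
      have hB : μ x ≤ ∑ u, μ u := Finset.single_le_sum (fun u _ => hsubμ.1 u) (mem_univ x)
      linarith [hrow x, hsubμ.2]
    · intro x y hpos
      by_contra hR'
      have := hF.2.1 x y hR'
      linarith
  · intro h s t hst a μ hDs
    obtain ⟨ν, hDt, δ, hbd, hsupp, hrow, hcol⟩ := h s t hst a μ hDs
    exact ⟨ν, hDt, lift_of_weight R μ ν δ (fun x y => (hbd x y).1) hsupp hrow hcol⟩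
end

section
/- Let (S, Act, D) be a finitely branching probabilistic automaton over a finite state space and ε ≥ 0. Define the decreasing sequence ≺_ε^0 = S × S and ≺_ε^{n+1} = F^ε(≺_ε^n). Then the largest ε-simulation ≺_ε equals the intersection ⋂_{n ∈ ℕ} ≺_ε^n. -/
open Finset

/-- The functional F^ε on relations. -/
def Fsim {S Act : Type*} [Fintype S] (D : S → Act → (S → ℝ) → Prop) (ε : ℝ)
    (R : S → S → Prop) : S → S → Prop :=
  fun s t => ∀ a μ, D s a μ → ∃ ν, D t a ν ∧ Lift ε R μ ν

lemma mass_mono {S : Type*} [Fintype S] {μ : S → ℝ} (hμ : ∀ s, 0 ≤ μ s)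
    {E F : Set S} (h : E ⊆ F) : mass μ E ≤ mass μ F := by
  refine Finset.sum_le_sum fun s _ => ?_
  exact Set.indicator_le_indicator_of_subset h hμ s

lemma relImage_mono {S T : Type*} {R R' : S → T → Prop}
    (h : ∀ x y, R x y → R' x y) (E : Set S) : relImage R E ⊆ relImage R' E := by
  rintro y ⟨x, hx, hxy⟩
  exact ⟨x, hx, h x y hxy⟩

lemma lift_mono {S : Type*} [Fintype S] {ε : ℝ} {R R' : S → S → Prop} {μ ν : S → ℝ}
    (hν : ∀ s, 0 ≤ ν s) (h : ∀ x y, R x y → R' x y) (hl : Lift ε R μ ν) :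
    Lift ε R' μ ν := fun E =>
  (hl E).trans (add_le_add_left (mass_mono hν (relImage_mono h E)) ε)

/-- The largest ε-simulation equals the intersection of the iterates
    ≺_ε^0 = S × S, ≺_ε^{n+1} = F^ε(≺_ε^n). -/
theorem sim_eq_iInter_iterates {S Act : Type*} [Fintype S]
    (D : S → Act → (S → ℝ) → Prop)
    (hD : ∀ s a μ, D s a μ → IsSubdist μ)
    (hfb : ∀ s a, {μ | D s a μ}.Finite)
    (ε : ℝ) (hε : 0 ≤ ε)
    (seq : ℕ → S → S → Prop)
    (h0 : ∀ s t, seq 0 s t)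
    (hsucc : ∀ n, seq (n + 1) = Fsim D ε (seq n)) :
    ∀ s t : S, (∃ R, IsEpsSim D ε R ∧ R s t) ↔ ∀ n, seq n s t := by
  classical
  -- seq is decreasing
  have hdec : ∀ n, ∀ x y, seq (n + 1) x y → seq n x y := by
    intro n
    induction n with
    | zero => intro x y _; exact h0 x y
    | succ n ih =>
      intro x y h
      rw [hsucc] at h ⊢
      intro a μ hμ
      obtain ⟨ν, hν, hl⟩ := h a μ hμ
      exact ⟨ν, hν, lift_mono (hD _ _ _ hν).1 ih hl⟩
  have hanti : ∀ m n, m ≤ n → ∀ x y, seq n x y → seq m x y := by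
    intro m n hmn
    induction hmn with
    | refl => exact fun x y h => h
    | step h ih => intro x y hy; exact ih x y (hdec _ x y hy)
  set Rinf : S → S → Prop := fun x y => ∀ n, seq n x y with hRinf
  -- there is N with seq N ⊆ Rinf
  have hstab : ∃ N, ∀ x y, seq N x y → Rinf x y := by
    set f : S × S → ℕ := fun p =>
      if h : ∃ n, ¬ seq n p.1 p.2 then h.choose else 0 with hf
    refine ⟨Finset.univ.sup f, fun x y hxy n => ?_⟩
    by_contra hn
    have hex : ∃ m, ¬ seq m x y := ⟨n, hn⟩
    have h1 : ¬ seq (f (x, y)) x y := by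
      simp only [hf, dif_pos hex]
      exact hex.choose_spec
    exact h1 (hanti _ _ (Finset.le_sup (Finset.mem_univ (x, y))) x y hxy)
  obtain ⟨N, hN⟩ := hstab
  intro s t
  constructor
  · rintro ⟨R, hR, hst⟩ n
    induction n generalizing s t with
    | zero => exact h0 s t
    | succ n ih =>
      rw [hsucc]
      intro a μ hμ
      obtain ⟨ν, hν, hl⟩ := hR s t hst a μ hμ
      have : ∀ x y, R x y → seq n x y := fun x y h => ih x y h
      exact ⟨ν, hν, lift_mono (hD _ _ _ hν).1 this hl⟩
  · intro hs
    refine ⟨Rinf, ?_, fun n => hs n⟩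
    intro x y hxy a μ hμ
    -- for each n, a witness ν with Lift ε (seq n) μ ν
    have hw : ∀ n, ∃ ν, D y a ν ∧ Lift ε (seq n) μ ν := by
      intro n
      have := hxy (n + 1)
      rw [hsucc] at this
      exact this a μ hμ
    choose w hwD hwL using hw
    -- pigeonhole on the finitely many successors
    have : Finite {ν // D y a ν} := (hfb y a).to_subtype
    obtain ⟨⟨ν, hνD⟩, hfib⟩ :=
      Finite.exists_infinite_fiber (fun n => (⟨w n, hwD n⟩ : {ν // D y a ν}))
    have hνL : ∀ n, Lift ε (seq n) μ ν := by
      intro n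
      obtain ⟨m, hm, hmn⟩ := (Set.infinite_coe_iff.mp hfib).exists_gt n
      have hwm : w m = ν := congrArg Subtype.val hm
      exact lift_mono (hD _ _ _ hνD).1 (fun x' y' h => hanti n m hmn.le x' y' h)
        (hwm ▸ hwL m)
    refine ⟨ν, hνD, fun E => ?_⟩
    calc mass μ E ≤ mass ν (relImage (seq N) E) + ε := hνL N E
      _ ≤ mass ν (relImage Rinf E) + ε := by
          exact add_le_add_left
            (mass_mono (hD _ _ _ hνD).1 (relImage_mono (fun x' y' h => hN x' y' h) E)) ε
end

section
/- There exists a finite probabilistic automaton and states s, t such that s ≺^{prio} t (a priori 0-simulation) but not s ≺ t (0-simulation). Concretely, the automaton of Example with states s, s₁, s₂, s₃ where s has one a-transition μ with μ(s₁)=1/3, μ(s₂)=1/4, μ(s₃)=5/12, each sᵢ has a bᵢ-transition with probability 1, and t has three a-transitions ν₁, ν₂, ν₃ to states t₁, t₂, t₃ (each tᵢ having a bᵢ-transition with probability 1) with ν₁=(7/24,7/24,5/12), ν₂=(3/8,1/4,3/8), ν₃=(1/3,1/3,1/3), witnesses this separation. -/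
open Finset

def IsPrioSim {S Act : Type*} [Fintype S] (D : S → Act → (S → ℝ) → Prop) (ε : ℝ)
    (R : S → S → Prop) : Prop :=
  ∀ s t, R s t → ∀ a μ, D s a μ → ∀ E : Set S,
    ∃ ν, D t a ν ∧ mass μ E ≤ mass ν (relImage R E) + ε

namespace PrioExample

inductive St where
  | s | s1 | s2 | s3 | s4 | s5 | s6
  | t | t1 | t2 | t3 | t4 | t5 | t6
  deriving DecidableEq

instance : Fintype St :=
  Fintype.ofList [.s, .s1, .s2, .s3, .s4, .s5, .s6, .t, .t1, .t2, .t3, .t4, .t5, .t6]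
    (by intro x; cases x <;> simp)

inductive Act where
  | a | b1 | b2 | b3
  deriving DecidableEq

instance : Fintype Act :=
  Fintype.ofList [.a, .b1, .b2, .b3] (by intro x; cases x <;> simp)

open St Act

noncomputable def dirac (x : St) : St → ℝ := fun y => if y = x then 1 else 0

noncomputable def muS : St → ℝ := fun x =>
  match x with
  | .s1 => 1/3 | .s2 => 1/4 | .s3 => 5/12 | _ => 0

noncomputable def nu1 : St → ℝ := fun x =>
  match x with
  | .t1 => 7/24 | .t2 => 7/24 | .t3 => 5/12 | _ => 0

noncomputable def nu2 : St → ℝ := fun x =>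
  match x with
  | .t1 => 3/8 | .t2 => 1/4 | .t3 => 3/8 | _ => 0

noncomputable def nu3 : St → ℝ := fun x =>
  match x with
  | .t1 => 1/3 | .t2 => 1/3 | .t3 => 1/3 | _ => 0

noncomputable def D : St → Act → (St → ℝ) → Prop := fun x act μ =>
  match x, act with
  | .s, .a => μ = muS
  | .t, .a => μ = nu1 ∨ μ = nu2 ∨ μ = nu3
  | .s1, .b1 => μ = dirac .s4
  | .s2, .b2 => μ = dirac .s5
  | .s3, .b3 => μ = dirac .s6
  | .t1, .b1 => μ = dirac .t4
  | .t2, .b2 => μ = dirac .t5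
  | .t3, .b3 => μ = dirac .t6
  | _, _ => False

open scoped Classical

/- ### auxiliary lemmas -/

lemma sum_St (f : St → ℝ) : ∑ x, f x =
    f .s + f .s1 + f .s2 + f .s3 + f .s4 + f .s5 + f .s6 +
    f .t + f .t1 + f .t2 + f .t3 + f .t4 + f .t5 + f .t6 := by
  have h : (Finset.univ : Finset St) =
      {.s, .s1, .s2, .s3, .s4, .s5, .s6, .t, .t1, .t2, .t3, .t4, .t5, .t6} := by decide
  rw [h]
  simp [Finset.sum_insert, Finset.mem_insert]
  ring

lemma mass_eq (μ : St → ℝ) (E : Set St) :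
    mass μ E = ∑ x, if x ∈ E then μ x else 0 := by
  classical
  simp [mass, Set.indicator_apply]

lemma mass_muS (E : Set St) : mass muS E =
    (if St.s1 ∈ E then (1:ℝ)/3 else 0) + (if St.s2 ∈ E then (1:ℝ)/4 else 0) +
    (if St.s3 ∈ E then (5:ℝ)/12 else 0) := by
  rw [mass_eq, sum_St]; simp [muS]

lemma mass_nu1 (E : Set St) : mass nu1 E =
    (if St.t1 ∈ E then (7:ℝ)/24 else 0) + (if St.t2 ∈ E then (7:ℝ)/24 else 0) +
    (if St.t3 ∈ E then (5:ℝ)/12 else 0) := by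
  rw [mass_eq, sum_St]; simp [nu1]

lemma mass_nu2 (E : Set St) : mass nu2 E =
    (if St.t1 ∈ E then (3:ℝ)/8 else 0) + (if St.t2 ∈ E then (1:ℝ)/4 else 0) +
    (if St.t3 ∈ E then (3:ℝ)/8 else 0) := by
  rw [mass_eq, sum_St]; simp [nu2]

lemma mass_nu3 (E : Set St) : mass nu3 E =
    (if St.t1 ∈ E then (1:ℝ)/3 else 0) + (if St.t2 ∈ E then (1:ℝ)/3 else 0) +
    (if St.t3 ∈ E then (1:ℝ)/3 else 0) := by
  rw [mass_eq, sum_St]; simp [nu3]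

lemma mass_dirac (x : St) (E : Set St) :
    mass (dirac x) E = if x ∈ E then 1 else 0 := by
  rw [mass_eq, sum_St]; cases x <;> simp [dirac]

/-- The witnessing relation for the a priori simulation. -/
def Rw : St → St → Prop := fun x y =>
  (x = .s ∧ y = .t) ∨ (x = .s1 ∧ y = .t1) ∨ (x = .s2 ∧ y = .t2) ∨ (x = .s3 ∧ y = .t3) ∨
  (x = .s4 ∧ y = .t4) ∨ (x = .s5 ∧ y = .t5) ∨ (x = .s6 ∧ y = .t6)

lemma mem_rel_t1 (E : Set St) : St.t1 ∈ relImage Rw E ↔ St.s1 ∈ E := by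
  constructor
  · rintro ⟨x, hx, hR⟩; simp only [Rw] at hR; simp_all
  · intro h; exact ⟨.s1, h, by simp [Rw]⟩

lemma mem_rel_t2 (E : Set St) : St.t2 ∈ relImage Rw E ↔ St.s2 ∈ E := by
  constructor
  · rintro ⟨x, hx, hR⟩; simp only [Rw] at hR; simp_all
  · intro h; exact ⟨.s2, h, by simp [Rw]⟩

lemma mem_rel_t3 (E : Set St) : St.t3 ∈ relImage Rw E ↔ St.s3 ∈ E := by
  constructor
  · rintro ⟨x, hx, hR⟩; simp only [Rw] at hR; simp_all
  · intro h; exact ⟨.s3, h, by simp [Rw]⟩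

lemma mem_rel_t4 (E : Set St) : St.t4 ∈ relImage Rw E ↔ St.s4 ∈ E := by
  constructor
  · rintro ⟨x, hx, hR⟩; simp only [Rw] at hR; simp_all
  · intro h; exact ⟨.s4, h, by simp [Rw]⟩

lemma mem_rel_t5 (E : Set St) : St.t5 ∈ relImage Rw E ↔ St.s5 ∈ E := by
  constructor
  · rintro ⟨x, hx, hR⟩; simp only [Rw] at hR; simp_all
  · intro h; exact ⟨.s5, h, by simp [Rw]⟩

lemma mem_rel_t6 (E : Set St) : St.t6 ∈ relImage Rw E ↔ St.s6 ∈ E := by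
  constructor
  · rintro ⟨x, hx, hR⟩; simp only [Rw] at hR; simp_all
  · intro h; exact ⟨.s6, h, by simp [Rw]⟩

/-- In this automaton s is a-priori-0-simulated by t, but not 0-simulated. -/
theorem prio_strictly_weaker :
    (∃ R : St → St → Prop, IsPrioSim D 0 R ∧ R .s .t) ∧
    ¬ (∃ R : St → St → Prop, IsEpsSim D 0 R ∧ R .s .t) := by
  constructor
  · refine ⟨Rw, ?_, by simp [Rw]⟩
    intro x y hR a μ hD E
    rcases hR with ⟨rfl, rfl⟩ | ⟨rfl, rfl⟩ | ⟨rfl, rfl⟩ | ⟨rfl, rfl⟩ |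
      ⟨rfl, rfl⟩ | ⟨rfl, rfl⟩ | ⟨rfl, rfl⟩
    · cases a
      case a =>
        have hμ : μ = muS := hD
        subst hμ
        rw [mass_muS]
        by_cases h1 : St.s1 ∈ E <;> by_cases h2 : St.s2 ∈ E <;> by_cases h3 : St.s3 ∈ E
        · exact ⟨nu1, Or.inl rfl, by
            rw [mass_nu1]
            simp only [mem_rel_t1, mem_rel_t2, mem_rel_t3, h1, h2, h3, if_true, if_false]
            norm_num⟩
        · exact ⟨nu1, Or.inl rfl, by
            rw [mass_nu1]
            simp only [mem_rel_t1, mem_rel_t2, mem_rel_t3, h1, h2, h3, if_true, if_false]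
            norm_num⟩
        · exact ⟨nu2, Or.inr (Or.inl rfl), by
            rw [mass_nu2]
            simp only [mem_rel_t1, mem_rel_t2, mem_rel_t3, h1, h2, h3, if_true, if_false]
            norm_num⟩
        · exact ⟨nu3, Or.inr (Or.inr rfl), by
            rw [mass_nu3]
            simp only [mem_rel_t1, mem_rel_t2, mem_rel_t3, h1, h2, h3, if_true, if_false]
            norm_num⟩
        · exact ⟨nu1, Or.inl rfl, by
            rw [mass_nu1]
            simp only [mem_rel_t1, mem_rel_t2, mem_rel_t3, h1, h2, h3, if_true, if_false]
            norm_num⟩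
        · exact ⟨nu1, Or.inl rfl, by
            rw [mass_nu1]
            simp only [mem_rel_t1, mem_rel_t2, mem_rel_t3, h1, h2, h3, if_true, if_false]
            norm_num⟩
        · exact ⟨nu1, Or.inl rfl, by
            rw [mass_nu1]
            simp only [mem_rel_t1, mem_rel_t2, mem_rel_t3, h1, h2, h3, if_true, if_false]
            norm_num⟩
        · exact ⟨nu1, Or.inl rfl, by
            rw [mass_nu1]
            simp only [mem_rel_t1, mem_rel_t2, mem_rel_t3, h1, h2, h3, if_true, if_false]
            norm_num⟩
      all_goals exact (hD : False).elim
    · cases a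
      case b1 =>
        have hμ : μ = dirac .s4 := hD
        subst hμ
        refine ⟨dirac .t4, rfl, ?_⟩
        rw [mass_dirac, mass_dirac, mem_rel_t4]
        by_cases h : St.s4 ∈ E <;> simp [h]
      all_goals exact (hD : False).elim
    · cases a
      case b2 =>
        have hμ : μ = dirac .s5 := hD
        subst hμ
        refine ⟨dirac .t5, rfl, ?_⟩
        rw [mass_dirac, mass_dirac, mem_rel_t5]
        by_cases h : St.s5 ∈ E <;> simp [h]
      all_goals exact (hD : False).elim
    · cases a
      case b3 =>
        have hμ : μ = dirac .s6 := hD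
        subst hμ
        refine ⟨dirac .t6, rfl, ?_⟩
        rw [mass_dirac, mass_dirac, mem_rel_t6]
        by_cases h : St.s6 ∈ E <;> simp [h]
      all_goals exact (hD : False).elim
    · exact (hD : False).elim
    · exact (hD : False).elim
    · exact (hD : False).elim
  · rintro ⟨R, hSim, hst⟩
    have no12 : ¬ R .s1 .t2 := fun h => by
      obtain ⟨ν, hν, -⟩ := hSim _ _ h .b1 (dirac .s4) rfl
      exact (hν : False)
    have no13 : ¬ R .s1 .t3 := fun h => by
      obtain ⟨ν, hν, -⟩ := hSim _ _ h .b1 (dirac .s4) rfl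
      exact (hν : False)
    have no31 : ¬ R .s3 .t1 := fun h => by
      obtain ⟨ν, hν, -⟩ := hSim _ _ h .b3 (dirac .s6) rfl
      exact (hν : False)
    have no32 : ¬ R .s3 .t2 := fun h => by
      obtain ⟨ν, hν, -⟩ := hSim _ _ h .b3 (dirac .s6) rfl
      exact (hν : False)
    obtain ⟨ν, hν, hL⟩ := hSim .s .t hst .a muS rfl
    have key1 := hL {St.s1}
    have key3 := hL {St.s3}
    rw [mass_muS] at key1 key3
    norm_num [Set.mem_singleton_iff] at key1 key3
    have ht2 : St.t2 ∉ relImage R {St.s1} := by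
      rintro ⟨x, hx, hR⟩
      rw [Set.mem_singleton_iff] at hx; subst hx; exact no12 hR
    have ht3 : St.t3 ∉ relImage R {St.s1} := by
      rintro ⟨x, hx, hR⟩
      rw [Set.mem_singleton_iff] at hx; subst hx; exact no13 hR
    have ht1' : St.t1 ∉ relImage R {St.s3} := by
      rintro ⟨x, hx, hR⟩
      rw [Set.mem_singleton_iff] at hx; subst hx; exact no31 hR
    have ht2' : St.t2 ∉ relImage R {St.s3} := by
      rintro ⟨x, hx, hR⟩
      rw [Set.mem_singleton_iff] at hx; subst hx; exact no32 hR
    rcases (hν : ν = nu1 ∨ ν = nu2 ∨ ν = nu3) with rfl | rfl | rfl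
    · rw [mass_nu1, if_neg ht2, if_neg ht3] at key1
      split_ifs at key1 <;> norm_num at key1
    · rw [mass_nu2, if_neg ht1', if_neg ht2'] at key3
      split_ifs at key3 <;> norm_num at key3
    · rw [mass_nu3, if_neg ht1', if_neg ht2'] at key3
      split_ifs at key3 <;> norm_num at key3

end PrioExample
end

section
/- For the logic L^N with relaxed semantics, for every formula φ and every ε ∈ ℚ there is a formula φ_ε (defined by structural induction: ⊤_ε = ⊤, (φ₁∧φ₂)_ε = (φ₁)_ε ∧ (φ₂)_ε, (φ₁∨φ₂)_ε = (φ₁)_ε ∨ (φ₂)_ε, (⟨a⟩{(φᵢ,pᵢ)}ᵢ)_ε = ⟨a⟩{((φᵢ)_ε, pᵢ−ε)}ᵢ, allowing thresholds outside [0,1]) such that ⟦φ⟧_ε = ⟦φ_ε⟧₀, and moreover (φ_ε)_{ε'} = φ_{ε+ε'}. -/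
open Finset

/-- Formulas of the logic L^N:
    φ ::= ⊤ | φ ∧ φ | φ ∨ φ | ⟨a⟩{(φᵢ, pᵢ)}ᵢ (I finite, pᵢ ∈ ℚ). -/
inductive LN (Act : Type*) where
  | top : LN Act
  | and : LN Act → LN Act → LN Act
  | or : LN Act → LN Act → LN Act
  | dia : Act → List (LN Act × ℚ) → LN Act

/-- The relaxed ε-semantics of L^N. -/
noncomputable def Sat {S Act : Type*} [Fintype S] (D : S → Act → (S → ℝ) → Prop)
    (ε : ℝ) : LN Act → S → Prop
  | .top, _ => True
  | .and φ ψ, s => Sat D ε φ s ∧ Sat D ε ψ s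
  | .or φ ψ, s => Sat D ε φ s ∨ Sat D ε ψ s
  | .dia a l, s => ∃ μ, D s a μ ∧
      ∀ p ∈ l, (p.2 : ℝ) - ε ≤ mass μ {x | Sat D ε p.1 x}
  decreasing_by
    all_goals simp_wf
    all_goals try omega
    have h := List.sizeOf_lt_of_mem ‹p ∈ l›
    obtain ⟨f, q⟩ := p
    simp only [Prod.mk.sizeOf_spec] at h
    simp only []
    omega

/-- The translation φ ↦ φ_ε: thresholds are shifted down by ε
    (and are allowed to leave [0,1]). -/
def transl {Act : Type*} (ε : ℚ) : LN Act → LN Act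
  | .top => .top
  | .and φ ψ => .and (transl ε φ) (transl ε ψ)
  | .or φ ψ => .or (transl ε φ) (transl ε ψ)
  | .dia a l => .dia a (l.attach.map fun p => (transl ε p.1.1, p.1.2 - ε))
  decreasing_by
    all_goals simp_wf
    all_goals try omega
    have h := List.sizeOf_lt_of_mem p.2
    obtain ⟨⟨f, q⟩, hp⟩ := p
    simp only [Prod.mk.sizeOf_spec] at h ⊢
    omega

lemma transl_dia {Act : Type*} (ε : ℚ) (a : Act) (l : List (LN Act × ℚ)) :
    transl ε (.dia a l) = .dia a (l.map fun p => (transl ε p.1, p.2 - ε)) := by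
  rw [transl]
  congr 1
  simp [List.map_attach_eq_pmap, List.pmap_eq_map]

lemma sat_dia {S Act : Type*} [Fintype S] (D : S → Act → (S → ℝ) → Prop) (ε : ℝ)
    (a : Act) (l : List (LN Act × ℚ)) (s : S) :
    Sat D ε (.dia a l) s ↔ ∃ μ, D s a μ ∧
      ∀ p ∈ l, (p.2 : ℝ) - ε ≤ mass μ {x | Sat D ε p.1 x} := by
  rw [Sat]

lemma transl_add {Act : Type*} (ε ε' : ℚ) :
    ∀ φ : LN Act, transl ε' (transl ε φ) = transl (ε + ε') φ
  | .top => by simp [transl]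
  | .and φ ψ => by simp [transl, transl_add ε ε' φ, transl_add ε ε' ψ]
  | .or φ ψ => by simp [transl, transl_add ε ε' φ, transl_add ε ε' ψ]
  | .dia a l => by
      rw [transl_dia, transl_dia, transl_dia, List.map_map]
      congr 1
      refine List.map_congr_left fun p hp => ?_
      have := transl_add ε ε' p.1
      simp only [Function.comp_apply, this]
      congr 1
      ring
  termination_by φ => sizeOf φ
  decreasing_by
    all_goals simp_wf
    all_goals try omega
    have h := List.sizeOf_lt_of_mem hp
    obtain ⟨f, q⟩ := p
    simp only [Prod.mk.sizeOf_spec] at h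
    simp only []
    omega

lemma sat_transl {S Act : Type*} [Fintype S] (D : S → Act → (S → ℝ) → Prop) (ε : ℚ) :
    ∀ (φ : LN Act) (s : S), Sat D (ε : ℝ) φ s ↔ Sat D 0 (transl ε φ) s
  | .top, s => by simp [transl, Sat]
  | .and φ ψ, s => by
      rw [transl]
      simp only [Sat]
      rw [sat_transl D ε φ s, sat_transl D ε ψ s]
  | .or φ ψ, s => by
      rw [transl]
      simp only [Sat]
      rw [sat_transl D ε φ s, sat_transl D ε ψ s]
  | .dia a l, s => by
      rw [transl_dia, sat_dia, sat_dia]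
      refine exists_congr fun μ => and_congr_right fun _ => ?_
      rw [List.forall_mem_map]
      refine forall_congr' fun p => forall_congr' fun hp => ?_
      have hset : {x | Sat D (ε : ℝ) p.1 x} = {x | Sat D 0 (transl ε p.1) x} := by
        ext x; exact sat_transl D ε p.1 x
      rw [hset]
      push_cast
      constructor <;> intro h <;> linarith
  termination_by φ _ => sizeOf φ
  decreasing_by
    all_goals simp_wf
    all_goals try omega
    have h := List.sizeOf_lt_of_mem hp
    obtain ⟨f, q⟩ := p
    simp only [Prod.mk.sizeOf_spec] at h
    simp only []
    omega

/-- ⟦φ⟧_ε = ⟦φ_ε⟧₀, and the translation is additive: (φ_ε)_{ε'} = φ_{ε+ε'}. -/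
theorem transl_correct {S Act : Type*} [Fintype S]
    (D : S → Act → (S → ℝ) → Prop) :
    (∀ (ε : ℚ) (φ : LN Act) (s : S),
      Sat D (ε : ℝ) φ s ↔ Sat D 0 (transl ε φ) s) ∧
    (∀ (ε ε' : ℚ) (φ : LN Act), transl ε' (transl ε φ) = transl (ε + ε') φ) := by
  exact ⟨fun ε φ s => sat_transl D ε φ s, fun ε ε' φ => transl_add ε ε' φ⟩
end

section
/- Non-expansiveness of parallel composition under synchronous product of distributions: let S₁, S₂, S be finite sets, μ₁ ∈ Sub(S₁), μ₂ ∈ Sub(S₂), ν ∈ Sub(S), R ⊆ S₁ × S₂ and ε ≥ 0 with μ₁ L^ε(R) μ₂. Define R' ⊆ (S₁×S) × (S₂×S) by (x,u) R' (y,v) iff x R y and u = v. Then (μ₁ ⊗ ν) L^ε(R') (μ₂ ⊗ ν), where (μ ⊗ ν)(x,u) = μ(x)·ν(u). -/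
open Finset

/-- The lifting of a relation between two (possibly different) finite sets. -/
def Lift2 {S T : Type*} [Fintype S] [Fintype T] (ε : ℝ) (R : S → T → Prop)
    (μ : S → ℝ) (ν : T → ℝ) : Prop :=
  ∀ E : Set S, mass μ E ≤ mass ν (relImage R E) + ε

/-- The independent product of sub-distributions. -/
noncomputable def prodDist {S T : Type*} (μ : S → ℝ) (ν : T → ℝ) : S × T → ℝ :=
  fun p => μ p.1 * ν p.2

/-- Non-expansiveness of the synchronous product: if μ₁ L^ε(R) μ₂ then
    (μ₁ ⊗ ν) L^ε(R') (μ₂ ⊗ ν), where (x,u) R' (y,v) iff x R y and u = v. -/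
theorem lift_prod {S₁ S₂ S : Type*} [Fintype S₁] [Fintype S₂] [Fintype S]
    (μ₁ : S₁ → ℝ) (μ₂ : S₂ → ℝ) (ν : S → ℝ)
    (h₁ : IsSubdist μ₁) (h₂ : IsSubdist μ₂) (hν : IsSubdist ν)
    (R : S₁ → S₂ → Prop) (ε : ℝ) (hε : 0 ≤ ε)
    (h : Lift2 ε R μ₁ μ₂) :
    Lift2 ε (fun (p : S₁ × S) (q : S₂ × S) => R p.1 q.1 ∧ p.2 = q.2)
      (prodDist μ₁ ν) (prodDist μ₂ ν) := by
  classical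
  intro E
  set Eu : S → Set S₁ := fun u => {x | (x, u) ∈ E} with hEu
  have hmem : ∀ (y : S₂) (u : S),
      ((y, u) ∈ relImage (fun (p : S₁ × S) (q : S₂ × S) => R p.1 q.1 ∧ p.2 = q.2) E)
        ↔ y ∈ relImage R (Eu u) := by
    intro y u
    constructor
    · rintro ⟨⟨x, v⟩, hxE, hR, hv⟩
      subst hv
      exact ⟨x, hxE, hR⟩
    · rintro ⟨x, hx, hR⟩
      exact ⟨(x, u), hx, hR, rfl⟩
  have hL : mass (prodDist μ₁ ν) E = ∑ u, ν u * mass μ₁ (Eu u) := by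
    unfold mass
    rw [Fintype.sum_prod_type_right]
    refine Finset.sum_congr rfl fun u _ => ?_
    rw [Finset.mul_sum]
    refine Finset.sum_congr rfl fun x _ => ?_
    by_cases hx : (x, u) ∈ E
    · simp [Set.indicator, hx, prodDist, Eu, mul_comm]
    · simp [Set.indicator, hx, prodDist, Eu]
  have hRt : mass (prodDist μ₂ ν)
      (relImage (fun (p : S₁ × S) (q : S₂ × S) => R p.1 q.1 ∧ p.2 = q.2) E)
      = ∑ u, ν u * mass μ₂ (relImage R (Eu u)) := by
    unfold mass
    rw [Fintype.sum_prod_type_right]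
    refine Finset.sum_congr rfl fun u _ => ?_
    rw [Finset.mul_sum]
    refine Finset.sum_congr rfl fun y _ => ?_
    by_cases hy : y ∈ relImage R (Eu u)
    · simp [Set.indicator, prodDist, (hmem y u).2 hy, hy, mul_comm]
    · have : (y, u) ∉ relImage (fun (p : S₁ × S) (q : S₂ × S) => R p.1 q.1 ∧ p.2 = q.2) E :=
        fun hc => hy ((hmem y u).1 hc)
      simp [Set.indicator, this, hy]
  rw [hL, hRt]
  calc ∑ u, ν u * mass μ₁ (Eu u)
      ≤ ∑ u, ν u * (mass μ₂ (relImage R (Eu u)) + ε) := by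
        refine Finset.sum_le_sum fun u _ => ?_
        exact mul_le_mul_of_nonneg_left (h (Eu u)) (hν.1 u)
    _ = (∑ u, ν u * mass μ₂ (relImage R (Eu u))) + (∑ u, ν u) * ε := by
        rw [Finset.sum_mul, ← Finset.sum_add_distrib]
        exact Finset.sum_congr rfl fun u _ => by ring
    _ ≤ (∑ u, ν u * mass μ₂ (relImage R (Eu u))) + ε := by
        have : (∑ u, ν u) * ε ≤ 1 * ε := mul_le_mul_of_nonneg_right hν.2 hε
        linarith
end
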